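/- arXiv:2006.06472 — 2 statements merged into one kernel-verified Lean document; each statement's English description precedes it below -/
import Mathlib

section
/- Let A be an abelian category, k ≥ 1, and let X: ⋯ → X_{k+1} → X_k → X_{k−1} → ⋯ → X_1 → C → 0 be an exact complex in A. Suppose Y: 0 → A → Y_{k−1} → ⋯ → Y_1 → C → 0 and Z: 0 → A → Z_{k−1} → ⋯ → Z_1 → C → 0 are two k-fold extensions of C by A, and that there exist morphisms of complexes X → Y and X → Z which are the identity on C and which induce the same morphism f: X_k → A in degree k. Then Y and Z are Yoneda equivalent k-fold extensions of C by A. -/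
open CategoryTheory CategoryTheory.Limits

universe v u

namespace YonedaExtension

variable {𝒜 : Type u} [Category.{v} 𝒜] [Abelian 𝒜]

/-- The data of a candidate extension of `C` by `A` of length `m`: a `ℕ`-indexed chain
complex `E` with `E.X 0 ≅ C`, `E.X m ≅ A` and `E.X i = 0` for `i > m`, i.e. a complex
`0 → A → E.X (m-1) → ⋯ → E.X 1 → C → 0`. -/
structure ExtSeq (m : ℕ) (C A : 𝒜) where
  E : ChainComplex 𝒜 ℕ
  isoC : E.X 0 ≅ C
  isoA : E.X m ≅ A
  isZero : ∀ i, m < i → Limits.IsZero (E.X i)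

/-- The candidate extension is exact (everywhere, which includes the injectivity of
`A → E.X (m-1)` and the surjectivity of `E.X 1 → C`). -/
def ExtSeq.IsExtension {m : ℕ} {C A : 𝒜} (S : ExtSeq m C A) : Prop :=
  ∀ i, S.E.ExactAt i

/-- There is a morphism of extensions `S → T` which is the identity on `A` and on `C`. -/
def ExtSeq.Dominates {m : ℕ} {C A : 𝒜} (S T : ExtSeq m C A) : Prop :=
  ∃ φ : S.E ⟶ T.E, φ.f 0 = S.isoC.hom ≫ T.isoC.inv ∧ φ.f m = S.isoA.hom ≫ T.isoA.inv

/-- Yoneda equivalence of `m`-fold extensions of `C` by `A`: the equivalence relation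
generated by the existence of a morphism of extensions which is the identity
on `A` and on `C`. -/
def YonedaEquiv {m : ℕ} {C A : 𝒜} (S T : ExtSeq m C A) : Prop :=
  Relation.EqvGen
    (fun S' T' : ExtSeq m C A => S'.IsExtension ∧ T'.IsExtension ∧ S'.Dominates T') S T


section Construction

open ZeroObject

variable {𝒜 : Type u} [Category.{v} 𝒜] [Abelian 𝒜]
variable (m : ℕ) (W : ChainComplex 𝒜 ℕ) (A : 𝒜) (f : W.X (m + 2) ⟶ A)

/-- The pushout object. -/
noncomputable abbrev PP : 𝒜 := pushout f (W.d (m + 2) (m + 1))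

noncomputable abbrev qq : PP m W A f ⟶ W.X m :=
  pushout.desc 0 (W.d (m + 1) m) (by simp)

/-- objects of the new complex -/
noncomputable def ppX : ℕ → 𝒜 := fun i =>
  if i ≤ m then W.X i else if i = m + 1 then PP m W A f else if i = m + 2 then A else 0

lemma ppX_le {i : ℕ} (h : i ≤ m) : ppX m W A f i = W.X i := by simp [ppX, h]

lemma ppX_P : ppX m W A f (m + 1) = PP m W A f := by simp [ppX]

lemma ppX_A : ppX m W A f (m + 2) = A := by simp [ppX]

lemma ppX_zero {i : ℕ} (h : m + 2 < i) : IsZero (ppX m W A f i) := by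
  have h1 : ¬ i ≤ m := by omega
  have h2 : i ≠ m + 1 := by omega
  have h3 : i ≠ m + 2 := by omega
  simp only [ppX, h1, h2, h3, if_false]
  exact isZero_zero 𝒜

/-- differentials of the new complex -/
noncomputable def ppd : ∀ n : ℕ, ppX m W A f (n + 1) ⟶ ppX m W A f n := fun n =>
  if h1 : n + 1 ≤ m then
    eqToHom (ppX_le m W A f h1) ≫ W.d (n + 1) n ≫ eqToHom (ppX_le m W A f (by omega)).symm
  else if h2 : n = m then
    eqToHom (show ppX m W A f (n + 1) = PP m W A f by rw [h2]; exact ppX_P m W A f) ≫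
      qq m W A f ≫ eqToHom (show W.X m = ppX m W A f n by rw [h2, ppX_le m W A f le_rfl])
  else if h3 : n = m + 1 then
    eqToHom (show ppX m W A f (n + 1) = A by rw [h3]; exact ppX_A m W A f) ≫
      pushout.inl f (W.d (m + 2) (m + 1)) ≫
        eqToHom (show PP m W A f = ppX m W A f n by rw [h3, ppX_P m W A f])
  else 0

lemma qq_d (k : ℕ) : qq m W A f ≫ W.d m k = 0 := by
  apply pushout.hom_ext <;> simp [qq, pushout.inl_desc_assoc, pushout.inr_desc_assoc]

lemma ppd_sq : ∀ n : ℕ, ppd m W A f (n + 1) ≫ ppd m W A f n = 0 := by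
  intro n
  rcases Nat.lt_trichotomy (n + 1) m with h | h | h
  · -- n + 2 ≤ m : both W-branch
    rw [ppd, ppd, dif_pos (show n + 1 + 1 ≤ m by omega), dif_pos (show n + 1 ≤ m by omega)]
    simp
  · -- n + 1 = m : q-branch then W-branch
    subst h
    rw [ppd, ppd, dif_neg (by omega), dif_pos rfl, dif_pos (le_refl (n + 1))]
    have hq : qq (n + 1) W A f ≫ W.d (n + 1) n = 0 := qq_d (n + 1) W A f n
    simp only [Category.assoc, eqToHom_trans_assoc, eqToHom_refl, Category.id_comp]
    rw [reassoc_of% hq, zero_comp, comp_zero]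
  · rcases Nat.lt_trichotomy n m with h' | h' | h'
    · omega
    · -- n = m : inl-branch then q-branch
      subst h'
      rw [ppd, ppd, dif_neg (by omega), dif_neg (by omega), dif_pos rfl, dif_neg (by omega),
        dif_pos rfl]
      have hiq : pushout.inl f (W.d (n + 2) (n + 1)) ≫ qq n W A f = 0 := by simp [qq, pushout.inl_desc]
      simp only [Category.assoc, eqToHom_trans_assoc, eqToHom_refl, Category.id_comp]
      rw [reassoc_of% hiq, zero_comp, comp_zero]
    · -- n ≥ m + 1 : top branch is zero
      rcases Nat.lt_trichotomy n (m + 1) with h'' | h'' | h''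
      · omega
      · subst h''
        rw [ppd, dif_neg (by omega), dif_neg (by omega), dif_neg (by omega)]
        simp
      · rw [ppd, dif_neg (by omega), dif_neg (by omega), dif_neg (by omega)]
        simp

/-- The pushout extension complex `0 → A → P → W_{m-1} → ⋯ → W_0 → 0`. -/
noncomputable def EE : ChainComplex 𝒜 ℕ := ChainComplex.of (ppX m W A f) (ppd m W A f) (ppd_sq m W A f)

lemma EE_X (i : ℕ) : (EE m W A f).X i = ppX m W A f i := rfl

lemma EE_d (n : ℕ) : (EE m W A f).d (n + 1) n = ppd m W A f n := ChainComplex.of_d _ _ _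

section Cokernel

/-- the canonical map `A ⊞ W_{m+1} → P` -/
noncomputable abbrev ππ : (A ⊞ W.X (m + 1) : 𝒜) ⟶ PP m W A f :=
  biprod.desc (pushout.inl f (W.d (m + 2) (m + 1))) (pushout.inr f (W.d (m + 2) (m + 1)))

noncomputable abbrev cc : W.X (m + 2) ⟶ (A ⊞ W.X (m + 1) : 𝒜) :=
  biprod.lift f (-(W.d (m + 2) (m + 1)))

lemma cc_ππ : cc m W A f ≫ ππ m W A f = 0 := by
  simp [biprod.lift_eq, Preadditive.add_comp, pushout.condition]

lemma epi_ππ : Epi (ππ m W A f) := by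
  constructor
  intro T u v h
  apply pushout.hom_ext
  · simpa using biprod.inl ≫= h
  · simpa using biprod.inr ≫= h

noncomputable def isColimitππ :
    IsColimit (CokernelCofork.ofπ (ππ m W A f) (cc_ππ m W A f)) := by
  haveI := epi_ππ m W A f
  exact CokernelCofork.IsColimit.ofπ' _ _ (fun {T} k hk => by
    have hcond : f ≫ biprod.inl ≫ k = W.d (m + 2) (m + 1) ≫ biprod.inr ≫ k := by
      have : biprod.lift f (-(W.d (m + 2) (m + 1))) ≫ k = 0 := hk
      rw [biprod.lift_eq, Preadditive.add_comp, Preadditive.neg_comp] at this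
      simp only [Category.assoc] at this ⊢
      rw [← sub_eq_zero]
      simpa [sub_eq_add_neg] using this
    exact ⟨pushout.desc (biprod.inl ≫ k) (biprod.inr ≫ k) hcond, by
      apply biprod.hom_ext' <;> simp [pushout.inl_desc, pushout.inr_desc]⟩)

lemma exact_ccππ : (ShortComplex.mk _ _ (cc_ππ m W A f)).Exact :=
  ShortComplex.exact_of_g_is_cokernel _ (isColimitππ m W A f)

lemma mono_inl (hf0 : W.d (m + 3) (m + 2) ≫ f = 0) (hW : W.ExactAt (m + 2)) :
    Mono (pushout.inl f (W.d (m + 2) (m + 1))) := by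
  rw [Preadditive.mono_iff_cancel_zero]
  intro T t ht
  have h1 : (t ≫ biprod.inl) ≫ ππ m W A f = 0 := by
    simp only [Category.assoc, biprod.inl_desc]
    exact ht
  obtain ⟨T', e, he, s, hs⟩ := (exact_ccππ m W A f).exact_up_to_refinements (t ≫ biprod.inl) h1
  have h2 : s ≫ W.d (m + 2) (m + 1) = 0 := by
    have h := hs =≫ biprod.snd
    dsimp only [ShortComplex.mk] at h
    simp only [Category.assoc, biprod.inl_snd, comp_zero, biprod.lift_snd,
      Preadditive.comp_neg] at h
    rw [← neg_eq_zero]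
    exact h.symm
  have h4 : e ≫ t = s ≫ f := by
    have h := hs =≫ biprod.fst
    dsimp only [ShortComplex.mk] at h
    simpa using h
  rw [W.exactAt_iff' (m + 3) (m + 2) (m + 1) (by simp [ChainComplex.prev])
    (by simp [ChainComplex.next_nat_succ])] at hW
  obtain ⟨T'', e2, he2, n, hn⟩ := hW.exact_up_to_refinements s h2
  dsimp only [HomologicalComplex.sc', HomologicalComplex.shortComplexFunctor'_obj_f,
    HomologicalComplex.shortComplexFunctor'_obj_X₁, HomologicalComplex.shortComplexFunctor'] at n hn
  have h3 : e2 ≫ s ≫ f = 0 := by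
    rw [← Category.assoc, hn, Category.assoc, hf0, comp_zero]
  haveI : Epi (e2 ≫ e) := epi_comp _ _
  apply (cancel_epi (e2 ≫ e)).1
  rw [comp_zero, Category.assoc, h4]
  exact h3

end Cokernel

section Exactness

variable (hW : ∀ i, W.ExactAt i) (hf0 : W.d (m + 3) (m + 2) ≫ f = 0)

lemma EE_exactAt_top {i : ℕ} (h : m + 2 < i) : (EE m W A f).ExactAt i := by
  rw [HomologicalComplex.exactAt_iff]
  exact ShortComplex.exact_of_isZero_X₂ _ (ppX_zero m W A f h)

include hW hf0 in
lemma EE_exactAt_A : (EE m W A f).ExactAt (m + 2) := by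
  rw [(EE m W A f).exactAt_iff' (m + 3) (m + 2) (m + 1) (by simp [ChainComplex.prev])
    (by simp)]
  have hf' : (EE m W A f).d (m + 3) (m + 2) = 0 := by
    rw [EE_d, ppd, dif_neg (by omega), dif_neg (by omega), dif_neg (by omega)]
    rfl
  rw [ShortComplex.exact_iff_mono _ (by exact hf')]
  have hd : (EE m W A f).d (m + 2) (m + 1) =
      eqToHom (ppX_A m W A f) ≫ pushout.inl f (W.d (m + 2) (m + 1)) ≫
        eqToHom (ppX_P m W A f).symm := by
    rw [EE_d, ppd, dif_neg (by omega), dif_neg (by omega), dif_pos rfl]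
  dsimp only [HomologicalComplex.sc', HomologicalComplex.shortComplexFunctor'_obj_g, HomologicalComplex.shortComplexFunctor']
  rw [hd]
  haveI := mono_inl m W A f hf0 (hW (m + 2))
  exact mono_comp (eqToHom (ppX_A m W A f)) (pushout.inl f (W.d (m + 2) (m + 1)) ≫ eqToHom (ppX_P m W A f).symm)

include hW in
lemma EE_exactAt_P : (EE m W A f).ExactAt (m + 1) := by
  rw [(EE m W A f).exactAt_iff' (m + 2) (m + 1) m (by simp [ChainComplex.prev]) (by simp)]
  rw [ShortComplex.exact_iff_exact_up_to_refinements]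
  intro T t ht
  dsimp only [HomologicalComplex.sc', HomologicalComplex.shortComplexFunctor'_obj_g,
    HomologicalComplex.shortComplexFunctor'_obj_f,
    HomologicalComplex.shortComplexFunctor'_obj_X₁,
    HomologicalComplex.shortComplexFunctor'_obj_X₂,
    HomologicalComplex.shortComplexFunctor'] at t ht ⊢
  dsimp only [EE_X] at t ht ⊢
  -- t : T ⟶ (EE).X (m+1) ; ht : t ≫ EE.d (m+1) m = 0
  have hdm : (EE m W A f).d (m + 1) m =
      eqToHom (ppX_P m W A f) ≫ qq m W A f ≫ eqToHom (ppX_le m W A f le_rfl).symm := by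
    rw [EE_d, ppd, dif_neg (by omega), dif_pos rfl]
  set t' : T ⟶ PP m W A f := t ≫ eqToHom (ppX_P m W A f) with ht'
  have ht'q : t' ≫ qq m W A f = 0 := by
    have := ht
    rw [hdm] at this
    rw [← cancel_mono (eqToHom (ppX_le m W A f le_rfl).symm)]
    simp only [ht', Category.assoc, zero_comp]
    exact this
  haveI := epi_ππ m W A f
  obtain ⟨T1, e1, he1, u, hu⟩ := surjective_up_to_refinements_of_epi (ππ m W A f) t'
  have hππq : ππ m W A f ≫ qq m W A f = biprod.snd ≫ W.d (m + 1) m := by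
    apply biprod.hom_ext' <;> simp [qq, pushout.inl_desc, pushout.inr_desc]
  have h2 : (u ≫ biprod.snd) ≫ W.d (m + 1) m = 0 := by
    have : u ≫ (ππ m W A f ≫ qq m W A f) = 0 := by
      rw [← Category.assoc, ← hu, Category.assoc, ht'q, comp_zero]
    rw [hππq] at this
    simpa [Category.assoc] using this
  have hWex := hW (m + 1)
  rw [W.exactAt_iff' (m + 2) (m + 1) m (by simp [ChainComplex.prev]) (by simp)] at hWex
  obtain ⟨T2, e2, he2, n, hn⟩ := hWex.exact_up_to_refinements (u ≫ biprod.snd) h2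
  dsimp only [HomologicalComplex.sc', HomologicalComplex.shortComplexFunctor'_obj_f,
    HomologicalComplex.shortComplexFunctor'_obj_X₁,
    HomologicalComplex.shortComplexFunctor'] at n hn
  -- hn : e2 ≫ u ≫ biprod.snd = n ≫ W.d (m+2) (m+1)
  refine ⟨T2, e2 ≫ e1, epi_comp _ _,
    (e2 ≫ u ≫ biprod.fst + n ≫ f) ≫ eqToHom (ppX_A m W A f).symm, ?_⟩
  have hdA : (EE m W A f).d (m + 2) (m + 1) =
      eqToHom (ppX_A m W A f) ≫ pushout.inl f (W.d (m + 2) (m + 1)) ≫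
        eqToHom (ppX_P m W A f).symm := by
    rw [EE_d, ppd, dif_neg (by omega), dif_neg (by omega), dif_pos rfl]
  rw [hdA]
  have key : e2 ≫ e1 ≫ t' =
      (e2 ≫ u ≫ biprod.fst + n ≫ f) ≫ pushout.inl f (W.d (m + 2) (m + 1)) := by
    have hdesc : ππ m W A f =
        biprod.fst ≫ pushout.inl f (W.d (m + 2) (m + 1)) +
          biprod.snd ≫ pushout.inr f (W.d (m + 2) (m + 1)) := by
      apply biprod.hom_ext' <;> simp
    rw [Preadditive.add_comp,
      show (n ≫ f) ≫ pushout.inl f (W.d (m + 2) (m + 1)) =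
          (e2 ≫ u ≫ biprod.snd) ≫ pushout.inr f (W.d (m + 2) (m + 1)) by
        rw [Category.assoc, pushout.condition, ← Category.assoc, ← hn],
      hu, hdesc]
    simp [Preadditive.comp_add, Preadditive.add_comp, Category.assoc]
  calc (e2 ≫ e1) ≫ t
      = (e2 ≫ e1 ≫ t') ≫ eqToHom (ppX_P m W A f).symm := by
        simp [ht', Category.assoc]
    _ = _ := by
        rw [key]
        simp [Category.assoc]

include hW in
lemma EE_exactAt_q : (EE m W A f).ExactAt m := by
  have hdm : (EE m W A f).d (m + 1) m =
      eqToHom (ppX_P m W A f) ≫ qq m W A f ≫ eqToHom (ppX_le m W A f le_rfl).symm := by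
    rw [EE_d, ppd, dif_neg (by omega), dif_pos rfl]
  rcases m with _ | n
  · -- m = 0
    rw [(EE 0 W A f).exactAt_iff' 1 0 0 (by simp [ChainComplex.prev]) (by simp)]
    rw [ShortComplex.exact_iff_exact_up_to_refinements]
    intro T t ht
    dsimp only [HomologicalComplex.sc', HomologicalComplex.shortComplexFunctor'_obj_g,
      HomologicalComplex.shortComplexFunctor'_obj_f,
      HomologicalComplex.shortComplexFunctor'_obj_X₁,
      HomologicalComplex.shortComplexFunctor'_obj_X₂,
      HomologicalComplex.shortComplexFunctor'] at t ht ⊢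
    dsimp only [EE_X] at t ht ⊢
    set t' : T ⟶ W.X 0 := t ≫ eqToHom (ppX_le 0 W A f le_rfl) with ht'
    have hWex := hW 0
    rw [W.exactAt_iff' 1 0 0 (by simp [ChainComplex.prev]) (by simp)] at hWex
    obtain ⟨T1, e, he, s, hs⟩ := hWex.exact_up_to_refinements t'
      (by rw [show (HomologicalComplex.sc' W 1 0 0).g = W.d 0 0 from rfl,
        HomologicalComplex.shape W 0 0 (by simp)]; exact comp_zero)
    dsimp only [HomologicalComplex.sc', HomologicalComplex.shortComplexFunctor'_obj_f,
      HomologicalComplex.shortComplexFunctor'_obj_X₁,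
      HomologicalComplex.shortComplexFunctor'] at s hs
    refine ⟨T1, e, he, s ≫ pushout.inr f (W.d 2 1) ≫ eqToHom (ppX_P 0 W A f).symm, ?_⟩
    rw [hdm]
    have : (s ≫ pushout.inr f (W.d 2 1)) ≫ qq 0 W A f = s ≫ W.d 1 0 := by
      simp [qq, pushout.inr_desc]
    calc e ≫ t = (e ≫ t') ≫ eqToHom (ppX_le 0 W A f le_rfl).symm := by
          simp [ht', Category.assoc]
      _ = _ := by
          rw [hs]
          simp only [Category.assoc, eqToHom_trans_assoc, eqToHom_refl, Category.id_comp,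
            Category.comp_id]
          simp [qq, pushout.inr_desc_assoc]
  · -- m = n + 1
    rw [(EE (n + 1) W A f).exactAt_iff' (n + 2) (n + 1) n (by simp [ChainComplex.prev]) (by simp)]
    rw [ShortComplex.exact_iff_exact_up_to_refinements]
    intro T t ht
    dsimp only [HomologicalComplex.sc', HomologicalComplex.shortComplexFunctor'_obj_g,
      HomologicalComplex.shortComplexFunctor'_obj_f,
      HomologicalComplex.shortComplexFunctor'_obj_X₁,
      HomologicalComplex.shortComplexFunctor'_obj_X₂,
      HomologicalComplex.shortComplexFunctor'] at t ht ⊢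
    dsimp only [EE_X] at t ht ⊢
    set t' : T ⟶ W.X (n + 1) := t ≫ eqToHom (ppX_le (n + 1) W A f le_rfl) with ht'
    have hdn : (EE (n + 1) W A f).d (n + 1) n =
        eqToHom (ppX_le (n + 1) W A f le_rfl) ≫ W.d (n + 1) n ≫
          eqToHom (ppX_le (n + 1) W A f (by omega) : ppX (n + 1) W A f n = W.X n).symm := by
      rw [EE_d, ppd, dif_pos le_rfl]
    have ht'd : t' ≫ W.d (n + 1) n = 0 := by
      rw [hdn] at ht
      rw [← cancel_mono (eqToHom (ppX_le (n + 1) W A f (by omega) :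
        ppX (n + 1) W A f n = W.X n).symm)]
      simp only [ht', Category.assoc, zero_comp]
      exact ht
    have hWex := hW (n + 1)
    rw [W.exactAt_iff' (n + 2) (n + 1) n (by simp [ChainComplex.prev]) (by simp)] at hWex
    obtain ⟨T1, e, he, s, hs⟩ := hWex.exact_up_to_refinements t' ht'd
    dsimp only [HomologicalComplex.sc', HomologicalComplex.shortComplexFunctor'_obj_f,
      HomologicalComplex.shortComplexFunctor'_obj_X₁,
      HomologicalComplex.shortComplexFunctor'] at s hs
    refine ⟨T1, e, he, s ≫ pushout.inr f (W.d (n + 3) (n + 2)) ≫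
      eqToHom (ppX_P (n + 1) W A f).symm, ?_⟩
    rw [hdm]
    have hr : (s ≫ pushout.inr f (W.d (n + 3) (n + 2))) ≫ qq (n + 1) W A f =
        s ≫ W.d (n + 2) (n + 1) := by
      simp [qq, pushout.inr_desc]
    calc e ≫ t = (e ≫ t') ≫ eqToHom (ppX_le (n + 1) W A f le_rfl).symm := by
          simp [ht', Category.assoc]
      _ = _ := by
          rw [hs]
          simp only [Category.assoc, eqToHom_trans_assoc, eqToHom_refl, Category.id_comp,
            Category.comp_id]
          simp only [← Category.assoc]
          rw [← hr]

include hW in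
lemma EE_exactAt_low {i : ℕ} (h : i + 1 ≤ m) : (EE m W A f).ExactAt i := by
  rcases i with _ | n
  · rw [(EE m W A f).exactAt_iff' 1 0 0 (by simp [ChainComplex.prev]) (by simp)]
    have hWex := hW 0
    rw [W.exactAt_iff' 1 0 0 (by simp [ChainComplex.prev]) (by simp)] at hWex
    refine ShortComplex.exact_of_iso (ShortComplex.isoMk
      (eqToIso (ppX_le m W A f h).symm)
      (eqToIso (ppX_le m W A f (show (0 : ℕ) ≤ m by omega)).symm)
      (eqToIso (ppX_le m W A f (show (0 : ℕ) ≤ m by omega)).symm) ?_ ?_) hWex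
    · dsimp only [HomologicalComplex.sc', HomologicalComplex.shortComplexFunctor'_obj_f,
        HomologicalComplex.shortComplexFunctor']
      rw [show (EE m W A f).d 1 0 = eqToHom (ppX_le m W A f h) ≫ W.d 1 0 ≫
          eqToHom (ppX_le m W A f (show (0 : ℕ) ≤ m by omega)).symm by
        rw [EE_d, ppd, dif_pos h]]
      dsimp only [EE_X]
      simp
    · dsimp only [HomologicalComplex.sc', HomologicalComplex.shortComplexFunctor'_obj_g,
        HomologicalComplex.shortComplexFunctor']
      rw [HomologicalComplex.shape W 0 0 (by simp),
        HomologicalComplex.shape (EE m W A f) 0 0 (by simp), zero_comp, comp_zero]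
  · rw [(EE m W A f).exactAt_iff' (n + 2) (n + 1) n (by simp [ChainComplex.prev]) (by simp)]
    have hWex := hW (n + 1)
    rw [W.exactAt_iff' (n + 2) (n + 1) n (by simp [ChainComplex.prev]) (by simp)] at hWex
    refine ShortComplex.exact_of_iso (ShortComplex.isoMk
      (eqToIso (ppX_le m W A f h).symm)
      (eqToIso (ppX_le m W A f (show n + 1 ≤ m by omega)).symm)
      (eqToIso (ppX_le m W A f (show n ≤ m by omega)).symm) ?_ ?_) hWex
    · dsimp only [HomologicalComplex.sc', HomologicalComplex.shortComplexFunctor'_obj_f,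
        HomologicalComplex.shortComplexFunctor']
      rw [show (EE m W A f).d (n + 2) (n + 1) = eqToHom (ppX_le m W A f h) ≫
          W.d (n + 2) (n + 1) ≫ eqToHom (ppX_le m W A f (show n + 1 ≤ m by omega)).symm by
        rw [EE_d, ppd, dif_pos h]]
      dsimp only [EE_X]
      simp
    · dsimp only [HomologicalComplex.sc', HomologicalComplex.shortComplexFunctor'_obj_g,
        HomologicalComplex.shortComplexFunctor']
      rw [show (EE m W A f).d (n + 1) n = eqToHom (ppX_le m W A f (show n + 1 ≤ m by omega)) ≫
          W.d (n + 1) n ≫ eqToHom (ppX_le m W A f (show n ≤ m by omega)).symm by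
        rw [EE_d, ppd, dif_pos (show n + 1 ≤ m by omega)]]
      dsimp only [EE_X]
      simp

include hW hf0 in
lemma EE_isExtension : ∀ i, (EE m W A f).ExactAt i := by
  intro i
  rcases Nat.lt_or_ge i m with h | h
  · exact EE_exactAt_low m W A f hW h
  · have : i = m ∨ i = m + 1 ∨ i = m + 2 ∨ m + 2 < i := by omega
    rcases this with h1 | h1 | h1 | h'
    · rw [h1]; exact EE_exactAt_q m W A f hW
    · rw [h1]; exact EE_exactAt_P m W A f hW
    · rw [h1]; exact EE_exactAt_A m W A f hW hf0
    · exact EE_exactAt_top m W A f h'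

end Exactness

section Domination

/-- The pushout extension as an `ExtSeq`. -/
noncomputable def EEext : ExtSeq (m + 2) (W.X 0) A where
  E := EE m W A f
  isoC := eqToIso (ppX_le m W A f (Nat.zero_le m))
  isoA := eqToIso (ppX_A m W A f)
  isZero := fun i hi => ppX_zero m W A f hi

variable (T : ExtSeq (m + 2) (W.X 0) A) (φ : W ⟶ T.E)

/-- components of the induced map from the pushout extension to `T` -/
noncomputable def εf (hφA : φ.f (m + 2) ≫ T.isoA.hom = f) :
    ∀ i, (EE m W A f).X i ⟶ T.E.X i := fun i =>
  if h : i ≤ m then eqToHom (ppX_le m W A f h) ≫ φ.f i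
  else if h2 : i = m + 1 then
    eqToHom (show (EE m W A f).X i = PP m W A f by rw [h2]; exact ppX_P m W A f) ≫
      pushout.desc (T.isoA.inv ≫ T.E.d (m + 2) (m + 1)) (φ.f (m + 1)) (by
        rw [← hφA]
        simp only [Category.assoc, Iso.hom_inv_id_assoc]
        exact φ.comm (m + 2) (m + 1)) ≫
      eqToHom (show T.E.X (m + 1) = T.E.X i by rw [h2])
  else if h3 : i = m + 2 then
    eqToHom (show (EE m W A f).X i = A by rw [h3]; exact ppX_A m W A f) ≫ T.isoA.inv ≫
      eqToHom (show T.E.X (m + 2) = T.E.X i by rw [h3])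
  else 0

/-- The induced map of complexes from the pushout extension to `T`. -/
noncomputable def EEhom (hφA : φ.f (m + 2) ≫ T.isoA.hom = f) : EE m W A f ⟶ T.E where
  f := εf m W A f T φ hφA
  comm' := by
    intro i j hij
    rw [ComplexShape.down_Rel] at hij
    subst hij
    rcases Nat.lt_or_ge (j + 1) (m + 1) with h | h
    · -- j + 1 ≤ m
      have h1 : j + 1 ≤ m := by omega
      have e1 : εf m W A f T φ hφA (j + 1) = eqToHom (ppX_le m W A f h1) ≫ φ.f (j + 1) := by
        simp only [εf]; rw [dif_pos h1]
        rfl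
      have e2 : εf m W A f T φ hφA j = eqToHom (ppX_le m W A f (show j ≤ m by omega)) ≫ φ.f j := by
        simp only [εf]; rw [dif_pos (show j ≤ m by omega)]
        rfl
      rw [e1, e2,
        show (EE m W A f).d (j + 1) j = eqToHom (ppX_le m W A f h1) ≫ W.d (j + 1) j ≫
          eqToHom (ppX_le m W A f (show j ≤ m by omega)).symm by rw [EE_d, ppd, dif_pos h1]]
      dsimp only [EE_X]
      simp only [Category.assoc, eqToHom_trans_assoc, eqToHom_refl, Category.id_comp]
      rw [φ.comm (j + 1) j]
    · have : j = m ∨ j = m + 1 ∨ m + 2 ≤ j := by omega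
      rcases this with h1 | h1 | h1
      · -- j = m
        subst j
        have e1 : εf m W A f T φ hφA (m + 1) = eqToHom (ppX_P m W A f) ≫
            pushout.desc (T.isoA.inv ≫ T.E.d (m + 2) (m + 1)) (φ.f (m + 1)) (by
              rw [← hφA]
              simp only [Category.assoc, Iso.hom_inv_id_assoc]
              exact φ.comm (m + 2) (m + 1)) := by
          simp only [εf]; rw [dif_neg (by omega)]
          simp
          rfl
        have e2 : εf m W A f T φ hφA m = eqToHom (ppX_le m W A f le_rfl) ≫ φ.f m := by
          simp only [εf]; rw [dif_pos le_rfl]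
          rfl
        rw [e1, e2,
          show (EE m W A f).d (m + 1) m = eqToHom (ppX_P m W A f) ≫ qq m W A f ≫
            eqToHom (ppX_le m W A f le_rfl).symm by
          rw [EE_d, ppd, dif_neg (by omega), dif_pos rfl]]
        dsimp only [EE_X]
        simp only [Category.assoc, eqToHom_trans_assoc, eqToHom_refl, Category.id_comp]
        congr 1
        apply pushout.hom_ext
        · simp [qq, pushout.inl_desc_assoc]
        · simp only [pushout.inr_desc_assoc, pushout.inr_desc]
          rw [φ.comm (m + 1) m]
      · -- j = m + 1
        subst j
        show εf m W A f T φ hφA (m + 2) ≫ T.E.d (m + 2) (m + 1) =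
          (EE m W A f).d (m + 2) (m + 1) ≫ εf m W A f T φ hφA (m + 1)
        have e1 : εf m W A f T φ hφA (m + 2) = eqToHom (ppX_A m W A f) ≫ T.isoA.inv := by
          simp only [εf]; rw [dif_neg (by omega)]
          simp
          rfl
        have e2 : εf m W A f T φ hφA (m + 1) = eqToHom (ppX_P m W A f) ≫
            pushout.desc (T.isoA.inv ≫ T.E.d (m + 2) (m + 1)) (φ.f (m + 1)) (by
              rw [← hφA]
              simp only [Category.assoc, Iso.hom_inv_id_assoc]
              exact φ.comm (m + 2) (m + 1)) := by
          simp only [εf]; rw [dif_neg (by omega)]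
          simp
          rfl
        rw [e1, e2,
          show (EE m W A f).d (m + 2) (m + 1) = eqToHom (ppX_A m W A f) ≫
            pushout.inl f (W.d (m + 2) (m + 1)) ≫ eqToHom (ppX_P m W A f).symm by
          rw [show (EE m W A f).d (m + 2) (m + 1) = (EE m W A f).d (m + 1 + 1) (m + 1) from rfl,
            EE_d, ppd, dif_neg (by omega), dif_neg (by omega), dif_pos rfl]]
        dsimp only [EE_X]
        simp only [Category.assoc, eqToHom_trans_assoc, eqToHom_refl, Category.id_comp]
        congr 1
        simp [pushout.inl_desc]
      · -- j ≥ m + 2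
        have e1 : εf m W A f T φ hφA (j + 1) = 0 := by
          simp only [εf]; rw [dif_neg (by omega), dif_neg (by omega), dif_neg (by omega)]
        have e0 : (EE m W A f).d (j + 1) j = 0 := by
          rw [EE_d, ppd, dif_neg (by omega), dif_neg (by omega), dif_neg (by omega)]
          rfl
        rw [e1, e0, zero_comp, zero_comp]

lemma EE_dominates (hφC : φ.f 0 = T.isoC.inv) (hφA : φ.f (m + 2) ≫ T.isoA.hom = f) :
    (EEext m W A f).Dominates T := by
  refine ⟨EEhom m W A f T φ hφA, ?_, ?_⟩
  · show εf m W A f T φ hφA 0 = _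
    rw [εf, dif_pos (Nat.zero_le m), hφC]
    rfl
  · show εf m W A f T φ hφA (m + 2) = _
    rw [εf, dif_neg (by omega), dif_neg (by omega), dif_pos rfl]
    simp only [eqToHom_refl, Category.comp_id]
    rfl

end Domination

end Construction



/-- Let `𝒜` be an abelian category, `k ≥ 1` (here `k = j + 1`), and let
`X : ⋯ → X_{k+1} → X_k → ⋯ → X_1 → C → 0` be an exact complex in `𝒜` (a `ℕ`-indexed chain
complex `W`, exact everywhere, with `C = W.X 0`). Suppose `Y : 0 → A → Y_{k-1} → ⋯ → Y_1 → C → 0`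
and `Z : 0 → A → Z_{k-1} → ⋯ → Z_1 → C → 0` are two k-fold extensions of `C` by `A` (with `A`
placed in degree `k`), and that there exist morphisms of complexes `X → Y` and `X → Z` which
are the identity on `C` and induce the same morphism `f : X_k → A` in degree `k`.
Then `Y` and `Z` are Yoneda equivalent extensions of `C` by `A`. -/
theorem statement3 {𝒜 : Type u} [Category.{v} 𝒜] [Abelian 𝒜] (j : ℕ)
    (W : ChainComplex 𝒜 ℕ) (hW : ∀ i, W.ExactAt i) (A : 𝒜)
    (Y Z : ExtSeq (j + 1) (W.X 0) A)
    (hY : Y.IsExtension) (hZ : Z.IsExtension)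
    (φ : W ⟶ Y.E) (ψ : W ⟶ Z.E)
    (hφC : φ.f 0 = Y.isoC.inv) (hψC : ψ.f 0 = Z.isoC.inv)
    (hsame : φ.f (j + 1) ≫ Y.isoA.hom = ψ.f (j + 1) ≫ Z.isoA.hom) :
    YonedaEquiv Y Z := by
  rcases j with _ | m
  · -- k = 1 : the extensions are isomorphisms `A ≅ C` and we compare them directly.
    -- `Y.E.d 1 0` is an isomorphism
    have hziso : ∀ (T : ExtSeq 1 (W.X 0) A), T.IsExtension → IsIso (T.E.d 1 0) := by
      intro T hT
      have hmono : Mono (T.E.d 1 0) := by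
        have h1 := hT 1
        rw [T.E.exactAt_iff' 2 1 0 (by simp [ChainComplex.prev]) (by simp)] at h1
        rw [ShortComplex.exact_iff_mono _ ((T.isZero 2 (by omega)).eq_of_src _ _)] at h1
        exact h1
      have hepi : Epi (T.E.d 1 0) := by
        have h0 := hT 0
        rw [T.E.exactAt_iff' 1 0 0 (by simp [ChainComplex.prev]) (by simp)] at h0
        rw [ShortComplex.exact_iff_epi _
          (HomologicalComplex.shape T.E 0 0 (by simp))] at h0
        exact h0
      exact isIso_of_mono_of_epi _
    haveI hYiso := hziso Y hY
    haveI hZiso := hziso Z hZ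
    set gY : A ⟶ W.X 0 := Y.isoA.inv ≫ Y.E.d 1 0 ≫ Y.isoC.hom with hgY
    set gZ : A ⟶ W.X 0 := Z.isoA.inv ≫ Z.E.d 1 0 ≫ Z.isoC.hom with hgZ
    haveI : IsIso gY := by rw [hgY]; infer_instance
    have hsame' : φ.f 1 ≫ Y.isoA.hom = ψ.f 1 ≫ Z.isoA.hom := hsame
    have hfY : (φ.f 1 ≫ Y.isoA.hom) ≫ gY = W.d 1 0 := by
      rw [hgY]
      simp only [Category.assoc, Iso.hom_inv_id_assoc]
      rw [← Category.assoc, φ.comm 1 0, Category.assoc, hφC]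
      simp
    have hfZ : (φ.f 1 ≫ Y.isoA.hom) ≫ gZ = W.d 1 0 := by
      rw [hsame', hgZ]
      simp only [Category.assoc, Iso.hom_inv_id_assoc]
      rw [← Category.assoc, ψ.comm 1 0, Category.assoc, hψC]
      simp
    haveI : Epi (W.d 1 0) := by
      have h0 := hW 0
      rw [W.exactAt_iff' 1 0 0 (by simp [ChainComplex.prev]) (by simp)] at h0
      rw [ShortComplex.exact_iff_epi _ (HomologicalComplex.shape W 0 0 (by simp))] at h0
      exact h0
    haveI : Epi (φ.f 1 ≫ Y.isoA.hom) := by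
      have heq : φ.f 1 ≫ Y.isoA.hom = W.d 1 0 ≫ inv gY := by
        rw [← hfY]
        simp
      rw [heq]
      exact epi_comp _ _
    have g_eq : gY = gZ := (cancel_epi (φ.f 1 ≫ Y.isoA.hom)).1 (by rw [hfY, hfZ])
    have sq : (Y.isoA.hom ≫ Z.isoA.inv) ≫ Z.E.d 1 0 = Y.E.d 1 0 ≫ (Y.isoC.hom ≫ Z.isoC.inv) := by
      have h := congrArg (fun t => Y.isoA.hom ≫ t ≫ Z.isoC.inv) g_eq.symm
      simp only [hgY, hgZ, Category.assoc, Iso.hom_inv_id_assoc, Iso.hom_inv_id,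
        Category.comp_id] at h
      simpa [Category.assoc] using h
    refine Relation.EqvGen.rel _ _ ⟨hY, hZ,
      ⟨⟨fun i => match i with
        | 0 => Y.isoC.hom ≫ Z.isoC.inv
        | 1 => Y.isoA.hom ≫ Z.isoA.inv
        | (n + 2) => 0, ?_⟩, rfl, rfl⟩⟩
    intro i j hij
    rw [ComplexShape.down_Rel] at hij
    subst hij
    match j with
    | 0 => exact sq
    | (n + 1) => exact (Y.isZero (n + 2) (by omega)).eq_of_src _ _
  · -- k = m + 2 : use the pushout extension
    set ff : W.X (m + 2) ⟶ A := φ.f (m + 2) ≫ Y.isoA.hom with hff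
    have hf0 : W.d (m + 3) (m + 2) ≫ ff = 0 := by
      rw [hff, ← Category.assoc, ← φ.comm (m + 3) (m + 2),
        (Y.isZero (m + 3) (by omega)).eq_of_src (Y.E.d (m + 3) (m + 2)) 0]
      simp
    have hEext : (EEext m W A ff).IsExtension := EE_isExtension m W A ff hW hf0
    have dY : (EEext m W A ff).Dominates Y := EE_dominates m W A ff Y φ hφC rfl
    have dZ : (EEext m W A ff).Dominates Z := EE_dominates m W A ff Z ψ hψC hsame.symm
    exact Relation.EqvGen.trans _ _ _
      (Relation.EqvGen.symm _ _ (Relation.EqvGen.rel _ _ ⟨hEext, hY, dY⟩))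
      (Relation.EqvGen.rel _ _ ⟨hEext, hZ, dZ⟩)

end YonedaExtension
end

section
/- Let n be a positive integer and M a small n-abelian category. For a finitely presented functor F ∈ mod-M one has V(F) = 0 if and only if F is effaceable; that is, the kernel of the exact functor V (the full subcategory of objects sent to a zero object) is exactly mod_0-M. -/
open CategoryTheory CategoryTheory.Limits

universe w u

namespace HigherAuslander

variable (M : Type u) [SmallCategory M] [Preadditive M]

/-- `(d^1, …, d^n)` is an `n`-cokernel of `d^0` in the complex
`T : X^0 → X^1 → ⋯ → X^{n+1}`: for every object `Y` the induced sequence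
`0 → Hom(X^{n+1}, Y) → ⋯ → Hom(X^0, Y)` of abelian groups is exact. -/
def IsNCokernelSeq {n : ℕ} (T : ComposableArrows M (n + 1)) : Prop :=
  T.IsComplex ∧
  (∀ (Y : M) (g : T.obj' (n + 1) ⟶ Y), T.map' n (n + 1) ≫ g = 0 → g = 0) ∧
  (∀ (i : ℕ), 1 ≤ i → ∀ (hi : i ≤ n), ∀ (Y : M) (g : T.obj' i ⟶ Y),
    T.map' (i - 1) i ≫ g = 0 → ∃ h : T.obj' (i + 1) ⟶ Y, g = T.map' i (i + 1) ≫ h)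

/-- `(d^0, …, d^{n-1})` is an `n`-kernel of `d^n` in the complex
`T : X^0 → X^1 → ⋯ → X^{n+1}`. -/
def IsNKernelSeq {n : ℕ} (T : ComposableArrows M (n + 1)) : Prop :=
  T.IsComplex ∧
  (∀ (Y : M) (g : Y ⟶ T.obj' 0), g ≫ T.map' 0 1 = 0 → g = 0) ∧
  (∀ (i : ℕ), 1 ≤ i → ∀ (hi : i ≤ n), ∀ (Y : M) (g : Y ⟶ T.obj' i),
    g ≫ T.map' i (i + 1) = 0 → ∃ h : Y ⟶ T.obj' (i - 1), g = h ≫ T.map' (i - 1) i)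

/-- An `n`-exact sequence: both a right `n`-exact and a left `n`-exact sequence. -/
def IsNExactSeq {n : ℕ} (T : ComposableArrows M (n + 1)) : Prop :=
  IsNCokernelSeq M T ∧ IsNKernelSeq M T

/-- `M` is an `n`-abelian category. -/
structure IsNAbelian (n : ℕ) : Prop where
  idempotentComplete : IsIdempotentComplete M
  hasNCokernel : ∀ ⦃X Y : M⦄ (f : X ⟶ Y),
    ∃ (T : ComposableArrows M (n + 1)) (eX : T.obj' 0 ≅ X) (eY : T.obj' 1 ≅ Y),
      T.map' 0 1 = eX.hom ≫ f ≫ eY.inv ∧ IsNCokernelSeq M T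
  hasNKernel : ∀ ⦃X Y : M⦄ (f : X ⟶ Y),
    ∃ (T : ComposableArrows M (n + 1)) (eX : T.obj' n ≅ X) (eY : T.obj' (n + 1) ≅ Y),
      T.map' n (n + 1) = eX.hom ≫ f ≫ eY.inv ∧ IsNKernelSeq M T
  nexact_of_mono : ∀ (T : ComposableArrows M (n + 1)),
    IsNCokernelSeq M T → Mono (T.map' 0 1) → IsNExactSeq M T
  nexact_of_epi : ∀ (T : ComposableArrows M (n + 1)),
    IsNKernelSeq M T → Epi (T.map' n (n + 1)) → IsNExactSeq M T

/-- A mono functor sends epimorphisms of `M` to monomorphisms of abelian groups. -/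
def IsMonoFunctor (F : Mᵒᵖ ⥤ AddCommGrpCat.{u}) : Prop :=
  ∀ ⦃X Y : M⦄ (f : X ⟶ Y), Epi f → Mono (F.map f.op)

/-- An absolutely pure functor: an additive mono functor which is a pure subfunctor of
every mono functor containing it (i.e. the quotient by it is always a mono functor). -/
def IsAbsolutelyPure (F : Mᵒᵖ ⥤ AddCommGrpCat.{u}) : Prop :=
  F.Additive ∧ IsMonoFunctor M F ∧
  ∀ (G : Mᵒᵖ ⥤ AddCommGrpCat.{u}), G.Additive → IsMonoFunctor M G →
    ∀ (ι : F ⟶ G), Mono ι → IsMonoFunctor M (Limits.cokernel ι)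

/-- The category `L₂(Mᵒᵖ, Ab)` of absolutely pure functors. -/
abbrev L2Cat := ObjectProperty.FullSubcategory (IsAbsolutelyPure M)

/-- The restricted Yoneda embedding `H̃ : M ⥤ L₂(Mᵒᵖ, Ab)`, defined under the hypothesis
(proved in [EN]) that every representable functor is absolutely pure. -/
def Htilde (hrep : ∀ X : M, IsAbsolutelyPure M (preadditiveYoneda.obj X)) :
    M ⥤ L2Cat M :=
  ObjectProperty.lift _ preadditiveYoneda hrep

/-- A finitely presented functor: one admitting an exact presentation
`Hom(-, Y) → Hom(-, X) → F → 0`, i.e. `F` is a cokernel of a morphism of representables. -/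
def IsFinitelyPresented (F : Mᵒᵖ ⥤ AddCommGrpCat.{u}) : Prop :=
  ∃ (X Y : M) (η : preadditiveYoneda.obj Y ⟶ preadditiveYoneda.obj X),
    Nonempty (F ≅ Limits.cokernel η)

/-- The category `mod-M` of finitely presented functors. -/
abbrev ModCat := ObjectProperty.FullSubcategory (IsFinitelyPresented M)

/-- The Yoneda embedding `M ⥤ mod-M`. -/
def yonedaMod : M ⥤ ModCat M :=
  ObjectProperty.lift _ preadditiveYoneda
    (fun X => ⟨X, X, 0, ⟨(Limits.cokernelZeroIsoTarget).symm⟩⟩)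

/-- An effaceable functor: one admitting a presentation
`Hom(-, Y) → Hom(-, X) → F → 0` with `Y → X` an epimorphism in `M`. -/
def IsEffaceable (F : Mᵒᵖ ⥤ AddCommGrpCat.{u}) : Prop :=
  ∃ (X Y : M) (f : Y ⟶ X), Epi f ∧ Nonempty (F ≅ Limits.cokernel (preadditiveYoneda.map f))

variable {M}

/-- The embedding of `M` into the essential image `ℬ` of `V`, identifying `M` with its
image under `H̃`. -/
def MtoB (hrep : ∀ X : M, IsAbsolutelyPure M (preadditiveYoneda.obj X))
    (V : ModCat M ⥤ L2Cat M) (e : yonedaMod M ⋙ V ≅ Htilde M hrep) :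
    M ⥤ V.EssImageSubcategory :=
  ObjectProperty.lift _ (Htilde M hrep) (fun X => ⟨(yonedaMod M).obj X, ⟨e.app X⟩⟩)

/-- The objects of `ℬ` lying in (the iso-closure of) the image of `M`. -/
def InM (hrep : ∀ X : M, IsAbsolutelyPure M (preadditiveYoneda.obj X))
    (V : ModCat M ⥤ L2Cat M) (e : yonedaMod M ⋙ V ≅ Htilde M hrep)
    (b : V.EssImageSubcategory) : Prop :=
  ∃ X : M, Nonempty ((MtoB hrep V e).obj X ≅ b)

/-- `P` is an `n`-cluster tilting subcategory of the abelian category `𝒜`: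
it is generating, cogenerating, functorially finite, and coincides with the two
`Ext`-orthogonality classes. -/
structure IsNClusterTilting (𝒜 : Type*) [Category 𝒜] [Abelian 𝒜] [HasExt.{w} 𝒜]
    (n : ℕ) (P : 𝒜 → Prop) : Prop where
  generating : ∀ A : 𝒜, ∃ (X : 𝒜) (π : X ⟶ A), P X ∧ Epi π
  cogenerating : ∀ A : 𝒜, ∃ (X : 𝒜) (ι : A ⟶ X), P X ∧ Mono ι
  leftApprox : ∀ A : 𝒜, ∃ (X : 𝒜) (f : A ⟶ X), P X ∧
    ∀ (X' : 𝒜) (g : A ⟶ X'), P X' → ∃ h : X ⟶ X', f ≫ h = g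
  rightApprox : ∀ A : 𝒜, ∃ (X : 𝒜) (f : X ⟶ A), P X ∧
    ∀ (X' : 𝒜) (g : X' ⟶ A), P X' → ∃ h : X' ⟶ X, h ≫ f = g
  mem_iff_ext_vanishing_left : ∀ A : 𝒜, P A ↔
    (∀ (X : 𝒜), P X → ∀ (k : ℕ), 1 ≤ k → k ≤ n - 1 → Subsingleton (Abelian.Ext A X k))
  mem_iff_ext_vanishing_right : ∀ A : 𝒜, P A ↔
    (∀ (X : 𝒜), P X → ∀ (k : ℕ), 1 ≤ k → k ≤ n - 1 → Subsingleton (Abelian.Ext X A k))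


section Statement11Proof

open Opposite Limits ZeroObject

variable {M : Type u} [SmallCategory M] [Preadditive M]

lemma app_eq_of_yoneda {X : M} {G : Mᵒᵖ ⥤ AddCommGrpCat.{u}}
    (u : preadditiveYoneda.obj X ⟶ G) {Z : M} (φ : Z ⟶ X) :
    u.app (op Z) φ = G.map φ.op (u.app (op X) (𝟙 X)) := by
  have h2 := ConcreteCategory.congr_hom (u.naturality φ.op) (𝟙 X)
  have h3 : u.app (op Z) (φ ≫ 𝟙 X) = G.map φ.op (u.app (op X) (𝟙 X)) := h2
  simpa using h3

lemma yoneda_cancel {X Y : M} (g : Y ⟶ X) (G : Mᵒᵖ ⥤ AddCommGrpCat.{u})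
    (hG : Mono (G.map g.op)) {u v : preadditiveYoneda.obj X ⟶ G}
    (h : preadditiveYoneda.map g ≫ u = preadditiveYoneda.map g ≫ v) : u = v := by
  have hinj : Function.Injective (G.map g.op) := (AddCommGrpCat.mono_iff_injective _).mp hG
  have key : u.app (op X) (𝟙 X) = v.app (op X) (𝟙 X) := by
    apply hinj
    rw [← app_eq_of_yoneda u g, ← app_eq_of_yoneda v g]
    have h2 := ConcreteCategory.congr_hom (congrFun (congrArg NatTrans.app h) (op Y)) (𝟙 Y)
    have h3 : u.app (op Y) (𝟙 Y ≫ g) = v.app (op Y) (𝟙 Y ≫ g) := h2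
    simpa using h3
  ext Z φ
  rw [app_eq_of_yoneda u φ, app_eq_of_yoneda v φ, key]

/-- The restricted Yoneda embedding sends epimorphisms of `M` to epimorphisms of `L₂`. -/
lemma htilde_map_epi (hrep : ∀ X : M, IsAbsolutelyPure M (preadditiveYoneda.obj X))
    {X Y : M} (g : Y ⟶ X) (hg : Epi g) : Epi ((Htilde M hrep).map g) := by
  constructor
  intro Z u v h
  exact InducedCategory.hom_ext (yoneda_cancel g Z.obj (Z.2.2.1 g hg) (u := u.hom) (v := v.hom)
    (congrArg InducedCategory.Hom.hom h))

/-- The restricted Yoneda embedding reflects epimorphisms. -/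
lemma epi_of_htilde_map_epi (hrep : ∀ X : M, IsAbsolutelyPure M (preadditiveYoneda.obj X))
    {X Y : M} (g : Y ⟶ X) (hg : Epi ((Htilde M hrep).map g)) : Epi g := by
  constructor
  intro W u v h
  have h2 : (Htilde M hrep).map g ≫ (Htilde M hrep).map u
      = (Htilde M hrep).map g ≫ (Htilde M hrep).map v := by
    rw [← Functor.map_comp, ← Functor.map_comp, h]
  have h3 := hg.left_cancellation _ _ h2
  have h4 : preadditiveYoneda.map u = preadditiveYoneda.map v := by
    have := congrArg InducedCategory.Hom.hom h3; exact this
  exact preadditiveYoneda.map_injective h4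

/-- The representable functor at a zero object of `M` is a zero presheaf. -/
lemma isZero_yoneda_zero {Z0 : M} (hZ0 : IsZero Z0) :
    IsZero ((preadditiveYoneda.obj Z0 : Mᵒᵖ ⥤ AddCommGrpCat.{u})) := by
  rw [Functor.isZero_iff]
  intro Z
  have : Subsingleton ((preadditiveYoneda.obj Z0).obj Z) :=
    ⟨fun a b => hZ0.eq_of_tgt (a : unop Z ⟶ Z0) b⟩
  exact AddCommGrpCat.isZero_of_subsingleton _

/-- Abstract lemma: given a colimit cofork over `(η, 0)` whose image under a functor `V`
killing zero morphisms is again a colimit, the image of the cofork point is a zero object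
iff the image of `η` is an epimorphism. -/
lemma epi_iff_isZero_aux {D : Type*} [Category D] [Preadditive D]
    {E : Type*} [Category E] [Preadditive E]
    (V : D ⥤ E) (hV0 : ∀ (P Q : D), V.map (0 : P ⟶ Q) = 0)
    {A B : D} (η : A ⟶ B) (c : Cofork η (0 : A ⟶ B))
    (hc : IsColimit (V.mapCocone c)) :
    Epi (V.map η) ↔ IsZero (V.obj c.pt) := by
  have w1 : η ≫ c.ι.app WalkingParallelPair.one = (0 : A ⟶ c.pt) := by
    have h := c.condition
    rw [Limits.zero_comp] at h
    exact h
  have hπ0 : V.map η ≫ V.map (c.ι.app WalkingParallelPair.one) = 0 := by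
    rw [← V.map_comp, w1, hV0]
  constructor
  · intro hepi
    rw [IsZero.iff_id_eq_zero]
    apply hc.hom_ext
    intro j
    have hz : (V.mapCocone c).ι.app WalkingParallelPair.zero = 0 := by
      rw [← (V.mapCocone c).w WalkingParallelPairHom.left]
      show V.map η ≫ V.map (c.ι.app WalkingParallelPair.one) = 0
      exact hπ0
    have hπz : V.map (c.ι.app WalkingParallelPair.one) = 0 :=
      hepi.left_cancellation _ _ (by rw [hπ0, Limits.comp_zero])
    cases j with
    | zero => rw [hz, Limits.zero_comp, Limits.zero_comp]
    | one =>
        show V.map (c.ι.app WalkingParallelPair.one) ≫ 𝟙 _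
          = V.map (c.ι.app WalkingParallelPair.one) ≫ 0
        rw [hπz, Limits.zero_comp, Limits.zero_comp]
  · intro hzero
    apply Preadditive.epi_of_cancel_zero
    intro W u hu
    let s : Cocone (parallelPair η (0 : A ⟶ B) ⋙ V) :=
      { pt := W
        ι :=
          { app := fun j => WalkingParallelPair.casesOn j 0 u
            naturality := by
              intro a b (f : WalkingParallelPairHom a b)
              cases f with
              | left =>
                  show V.map η ≫ u = 0 ≫ 𝟙 W
                  rw [hu, Limits.zero_comp]
              | right =>
                  show V.map (0 : A ⟶ B) ≫ u = 0 ≫ 𝟙 W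
                  rw [hV0, Limits.zero_comp, Limits.zero_comp]
              | id => cases a <;> simp } }
    have hfac : (V.mapCocone c).ι.app WalkingParallelPair.one ≫ hc.desc s = u :=
      hc.fac s WalkingParallelPair.one
    have hdesc : hc.desc s = 0 := hzero.eq_of_src _ _
    rw [hdesc, Limits.comp_zero] at hfac
    exact hfac.symm

end Statement11Proof

/-- For a finitely presented functor `F ∈ mod-M`, `V(F) = 0` if and only if
`F` is effaceable: the kernel of the exact functor `V` is exactly `mod₀-M`. -/
theorem statement11 (n : ℕ) (hn : 0 < n) (M : Type u) [SmallCategory M] [Preadditive M]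
    [HasZeroObject M] [HasBinaryBiproducts M]
    (hM : IsNAbelian M n)
    (hrep : ∀ X : M, IsAbsolutelyPure M (preadditiveYoneda.obj X))
    [Abelian (L2Cat M)] [Abelian (ModCat M)]
    (V : ModCat M ⥤ L2Cat M) [PreservesFiniteColimits V]
    (e : yonedaMod M ⋙ V ≅ Htilde M hrep) :
    ∀ F : ModCat M, Limits.IsZero (V.obj F) ↔ IsEffaceable M F.obj := by
  intro F
  obtain ⟨Z0, hZ0⟩ := HasZeroObject.zero (C := M)
  have h0 : IsZero ((Htilde M hrep).obj Z0) := by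
    rw [IsZero.iff_id_eq_zero]
    exact InducedCategory.hom_ext ((isZero_yoneda_zero hZ0).eq_of_src _ _)
  have hV0obj : IsZero (V.obj ((yonedaMod M).obj Z0)) :=
    IsZero.of_iso h0 (e.app Z0)
  have hVzero : ∀ (P Q : ModCat M), V.map (0 : P ⟶ Q) = 0 := by
    intro P Q
    have hfactor : (0 : P ⟶ Q)
        = (0 : P ⟶ (yonedaMod M).obj Z0) ≫ (0 : (yonedaMod M).obj Z0 ⟶ Q) := by
      rw [Limits.zero_comp]
    rw [hfactor, V.map_comp]
    have h1 : V.map (0 : P ⟶ (yonedaMod M).obj Z0) = 0 := hV0obj.eq_of_tgt _ _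
    rw [h1, Limits.zero_comp]
  have bridge : ∀ {X Y : M} (g : Y ⟶ X),
      (F.obj ≅ Limits.cokernel (preadditiveYoneda.map g)) →
      (Limits.IsZero (V.obj F) ↔ Epi g) := by
    intro X Y g i
    have hzh : ∀ (P Q : ModCat M), (0 : P ⟶ Q).hom = 0 := by
      intro P Q
      have h1 : (0 : P ⟶ P) ≫ (ObjectProperty.homMk 0 : P ⟶ Q) = 0 := Limits.zero_comp
      have h2 := congrArg InducedCategory.Hom.hom h1
      rw [← h2]
      exact (Limits.comp_zero (f := (0 : P ⟶ P).hom) (Z := Q.obj)).symm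
    let π : (yonedaMod M).obj X ⟶ F := ObjectProperty.homMk
      (cokernel.π (preadditiveYoneda.map g) ≫ i.inv : preadditiveYoneda.obj X ⟶ F.obj)
    have w : (yonedaMod M).map g ≫ π = (0 : (yonedaMod M).obj Y ⟶ (yonedaMod M).obj X) ≫ π := by
      apply InducedCategory.hom_ext
      show preadditiveYoneda.map g ≫ cokernel.π (preadditiveYoneda.map g) ≫ i.inv = _
      rw [← Category.assoc, cokernel.condition, Limits.zero_comp, Limits.zero_comp, hzh]
      rfl
    let c : Cofork ((yonedaMod M).map g) (0 : (yonedaMod M).obj Y ⟶ (yonedaMod M).obj X) :=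
      Cofork.ofπ π w
    have hcond : ∀ s : Cofork ((yonedaMod M).map g)
        (0 : (yonedaMod M).obj Y ⟶ (yonedaMod M).obj X),
        preadditiveYoneda.map g ≫ (Cofork.π s).hom = 0 := by
      intro s
      have hs := congrArg InducedCategory.Hom.hom s.condition
      rw [Limits.zero_comp, hzh] at hs
      exact hs
    have hc : IsColimit c := by
      refine Cofork.IsColimit.mk _
        (fun s => ObjectProperty.homMk (i.hom ≫ cokernel.desc (preadditiveYoneda.map g)
          ((Cofork.π s).hom) (hcond s) : F.obj ⟶ s.pt.obj))
        (fun s => ?_) (fun s m hm => ?_)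
      · apply InducedCategory.hom_ext
        show (cokernel.π (preadditiveYoneda.map g) ≫ i.inv) ≫
          i.hom ≫ cokernel.desc (preadditiveYoneda.map g)
            ((Cofork.π s).hom) (hcond s)
          = (Cofork.π s).hom
        rw [Category.assoc, Iso.inv_hom_id_assoc]; exact cokernel.π_desc _ _ _
      · apply InducedCategory.hom_ext
        show m.hom = (i.hom ≫ cokernel.desc (preadditiveYoneda.map g)
          ((Cofork.π s).hom) (hcond s) : F.obj ⟶ s.pt.obj)
        have h2 : i.inv ≫ m.hom = cokernel.desc (preadditiveYoneda.map g)
            ((Cofork.π s).hom) (hcond s) := by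
          apply coequalizer.hom_ext
          have hm' : (cokernel.π (preadditiveYoneda.map g) ≫ i.inv) ≫ m.hom
              = (Cofork.π s).hom := congrArg InducedCategory.Hom.hom hm
          refine Eq.trans ?_ (cokernel.π_desc _ _ (hcond s)).symm
          show cokernel.π (preadditiveYoneda.map g) ≫ i.inv ≫ m.hom
            = (Cofork.π s).hom
          rw [← Category.assoc]
          exact hm'
        rw [← h2, ← Category.assoc, Iso.hom_inv_id, Category.id_comp]
    have hc' : IsColimit (V.mapCocone c) := isColimitOfPreserves V hc
    have aux := epi_iff_isZero_aux V hVzero ((yonedaMod M).map g) c hc'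
    have nat : V.map ((yonedaMod M).map g)
        = e.hom.app Y ≫ (Htilde M hrep).map g ≫ e.inv.app X := by
      have h' : V.map ((yonedaMod M).map g) ≫ e.hom.app X
          = e.hom.app Y ≫ (Htilde M hrep).map g := e.hom.naturality g
      rw [← Category.assoc, ← h', Category.assoc, Iso.hom_inv_id_app]
      exact (Category.comp_id _).symm
    constructor
    · intro hz
      have h2 : Epi (V.map ((yonedaMod M).map g)) := aux.mpr hz
      rw [nat] at h2
      haveI := h2
      have h3 : Epi ((Htilde M hrep).map g ≫ e.inv.app X) := epi_of_epi (e.hom.app Y) _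
      have h4 : Epi ((Htilde M hrep).map g) := by
        have heq : (Htilde M hrep).map g
            = ((Htilde M hrep).map g ≫ e.inv.app X) ≫ e.hom.app X := by
          rw [Category.assoc, Iso.inv_hom_id_app, Category.comp_id]
        rw [heq]
        haveI := h3
        infer_instance
      exact epi_of_htilde_map_epi hrep g h4
    · intro hg
      haveI h1 : Epi ((Htilde M hrep).map g) := htilde_map_epi hrep g hg
      have h2 : Epi (V.map ((yonedaMod M).map g)) := by
        rw [nat]
        infer_instance
      exact aux.mp h2
  obtain ⟨X, Y, η, ⟨i⟩⟩ := F.2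
  constructor
  · intro hz
    set g := preadditiveYoneda.preimage η with hg
    have hgη : preadditiveYoneda.map g = η := preadditiveYoneda.map_preimage η
    have i' : F.obj ≅ Limits.cokernel (preadditiveYoneda.map g) := by
      rw [hgη]; exact i
    exact ⟨X, Y, g, (bridge g i').mp hz, ⟨i'⟩⟩
  · rintro ⟨X', Y', f, hf, ⟨j⟩⟩
    exact (bridge f j).mpr hf

end HigherAuslander
end
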